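/- Let d ≥ 4. For every ζ > 1 there exists C′ such that for every 0 < ε < 1 and every N > 0 the following holds. Let M = M(x,n) be a matrix of Rauzy induction such that the permutation datum reached after the n steps is π_L, min_{j∈{d−1,d}} |C_j(M)| > (N/ε²) · max_{i≤d−2} |C_i(M)|, max_{j∈{d−1,d}} |C_j(M)| / min_{j∈{d−1,d}} |C_j(M)| < ζ, and max_{i≤d−2} |C_i(M)| / min_{i≤d−2} |C_i(M)| < ζ. Then λ_{d−1}({y ∈ MΔ : max((R^n y)_{d−1}, (R^n y)_d) > ε/N}) < C′ ε λ_{d−1}(MΔ). -/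

import Mathlib

open MeasureTheory ENNReal Matrix

noncomputable section

/-- The open standard simplex in ℝ^d. -/
def openSimplex (d : ℕ) : Set (EuclideanSpace ℝ (Fin d)) :=
  {x | (∀ i, 0 < x i) ∧ ∑ i, x i = 1}

/-- A permutation datum: a pair of bijections of `{0, …, d-1}` (top and bottom rows). -/
structure PermDatum (d : ℕ) where
  top : Equiv.Perm (Fin d)
  bot : Equiv.Perm (Fin d)

/-- Irreducibility of a permutation datum: no proper initial block is preserved. -/
def PermDatum.Irreducible {d : ℕ} (π : PermDatum d) : Prop :=
  ∀ k : ℕ, 0 < k → k < d →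
    {i : Fin d | (π.top i : ℕ) < k} ≠ {i : Fin d | (π.bot i : ℕ) < k}

/-- The last position. -/
def lastIdx (d : ℕ) (h : 0 < d) : Fin d := ⟨d - 1, by omega⟩

/-- Package a bijective function on `Fin d` as a permutation. -/
def mkPerm {d : ℕ} (f : Fin d → Fin d) : Equiv.Perm (Fin d) := by
  classical exact if h : Function.Bijective f then Equiv.ofBijective f h else Equiv.refl _

/-- Successor in `Fin d`, clamped at the last position. -/
def finSucc {d : ℕ} (p : Fin d) : Fin d := ⟨min (p.1 + 1) (d - 1), by have := p.2; omega⟩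

/-- The new row after a Rauzy move in which `w` wins and `l` (occupying the last position of
the row `ρ`) loses: `l` is reinserted immediately after the position of `w`. -/
def bumpRow {d : ℕ} (ρ : Equiv.Perm (Fin d)) (w l : Fin d) : Fin d → Fin d := fun k =>
  if k = l then finSucc (ρ w) else if ρ k ≤ ρ w then ρ k else finSucc (ρ k)

/-- Winner and loser of one step of Rauzy induction (if defined). -/
def winLose {d : ℕ} (x : Fin d → ℝ) (π : PermDatum d) : Option (Fin d × Fin d) :=
  if h : 0 < d then
    let i := π.top.symm (lastIdx d h)
    let j := π.bot.symm (lastIdx d h)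
    if x j < x i then some (i, j) else if x i < x j then some (j, i) else none
  else none

/-- New permutation datum after a step in which `w` beats `l`. -/
def rauzyPermStep {d : ℕ} (π : PermDatum d) (w l : Fin d) : PermDatum d :=
  if h : 0 < d then
    if π.top w = lastIdx d h then ⟨π.top, mkPerm (bumpRow π.bot w l)⟩
    else ⟨mkPerm (bumpRow π.top w l), π.bot⟩
  else π

/-- One step of (unnormalized) Rauzy induction. -/
def rauzyStep {d : ℕ} (x : Fin d → ℝ) (π : PermDatum d) :
    Option ((Fin d → ℝ) × PermDatum d) :=
  (winLose x π).map fun wl =>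
    (Function.update x wl.1 (x wl.1 - x wl.2), rauzyPermStep π wl.1 wl.2)

/-- `n` steps of Rauzy induction (length data unnormalized). -/
def rauzyIter {d : ℕ} (x : Fin d → ℝ) (π : PermDatum d) :
    ℕ → Option ((Fin d → ℝ) × PermDatum d)
  | 0 => some (x, π)
  | n + 1 => (rauzyIter x π n).bind fun p => rauzyStep p.1 p.2

/-- The elementary matrix of a Rauzy step with winner `w` and loser `l`: the identity with its
`l`-th column replaced by `e_w + e_l`. -/
def elemMatrix {d : ℕ} (w l : Fin d) : Matrix (Fin d) (Fin d) ℝ :=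
  1 + Matrix.single w l 1

/-- The winner of the `(n+1)`-st step of Rauzy induction (if defined). -/
def stepWin {d : ℕ} (x : Fin d → ℝ) (π : PermDatum d) (n : ℕ) : Option (Fin d) :=
  (rauzyIter x π n).bind fun p => (winLose p.1 p.2).map Prod.fst

/-- The matrix `M(x,n) = E₁ E₂ ⋯ E_n` of the first `n` steps of Rauzy induction. -/
def rauzyMat {d : ℕ} (x : Fin d → ℝ) (π : PermDatum d) :
    ℕ → Option (Matrix (Fin d) (Fin d) ℝ)
  | 0 => some 1
  | n + 1 => (rauzyIter x π n).bind fun p =>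
      (winLose p.1 p.2).bind fun wl =>
        (rauzyMat x π n).map fun M => M * elemMatrix wl.1 wl.2

/-- Sum of the entries of the `j`-th column. -/
def colSum {d : ℕ} (M : Matrix (Fin d) (Fin d) ℝ) (j : Fin d) : ℝ := ∑ i, M i j

/-- The largest column entry sum `|C_max(M)| = ‖M‖`. -/
def maxColSum {d : ℕ} (M : Matrix (Fin d) (Fin d) ℝ) : ℝ := ⨆ j, colSum M j

/-- `ζ`-balanced: the ratio of the entry sums of any two columns is at most `ζ`. -/
def IsBalanced {d : ℕ} (ζ : ℝ) (M : Matrix (Fin d) (Fin d) ℝ) : Prop :=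
  ∀ j j', colSum M j ≤ ζ * colSum M j'

/-- Normalization of a vector to the affine hyperplane of coordinate-sum one. -/
def projNorm {d : ℕ} (v : Fin d → ℝ) : Fin d → ℝ := (∑ i, v i)⁻¹ • v

/-- The projectivized image `MΔ = {Mv/|Mv|₁ : v ∈ Δ}` of the simplex. -/
def mapSimplex {d : ℕ} (M : Matrix (Fin d) (Fin d) ℝ) : Set (EuclideanSpace ℝ (Fin d)) :=
  {y | ∃ v ∈ openSimplex d, (y : Fin d → ℝ) = projNorm (M.mulVec v)}

/-- `R^r y`: the point of `Δ` proportional to `M⁻¹ y`. -/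
def Rback {d : ℕ} (M : Matrix (Fin d) (Fin d) ℝ) (y : Fin d → ℝ) : Fin d → ℝ :=
  projNorm (M⁻¹.mulVec y)

/-- The hyperelliptic permutation datum: top row `1, …, d`; bottom row `d, …, 1`. -/
def piS (d : ℕ) : PermDatum d := ⟨Equiv.refl _, Fin.revPerm⟩

/-- Helper: an element of `Fin d` from a natural number (mod `d`), with the positivity of `d`
witnessed by a given element. -/
def fmk {d : ℕ} (k : Fin d) (n : ℕ) : Fin d := ⟨n % d, Nat.mod_lt n k.pos⟩

/-- The permutation datum `π_L`: top row `1, d-1, d, 2, 3, …, d-2`; bottom row `d, …, 1`. -/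
def piL (d : ℕ) : PermDatum d :=
  ⟨mkPerm (fun k => if (k : ℕ) = 0 then fmk k 0
      else if (k : ℕ) = d - 2 then fmk k 1
      else if (k : ℕ) = d - 1 then fmk k 2
      else fmk k ((k : ℕ) + 2)),
   Fin.revPerm⟩

/-- The permutation datum `π_R`: top row `1, 2, …, d`; bottom row `d, d-2, d-3, …, 1, d-1`. -/
def piR (d : ℕ) : PermDatum d :=
  ⟨Equiv.refl _,
   mkPerm (fun k => if (k : ℕ) = d - 1 then fmk k 0
      else if (k : ℕ) = d - 2 then fmk k (d - 1)
      else fmk k (d - 2 - (k : ℕ)))⟩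

/-- A matrix on the left hand side: the matrix of a finite path of Rauzy induction starting at
`π_L` in which the winner of every step lies in `{1, …, d-2}`. -/
def IsLHSMatrix (d : ℕ) (A : Matrix (Fin d) (Fin d) ℝ) : Prop :=
  ∃ (z : Fin d → ℝ) (m : ℕ), (∀ i, 0 < z i) ∧ rauzyMat z (piL d) m = some A ∧
    ∀ k < m, ∀ w : Fin d, stepWin z (piL d) k = some w → (w : ℕ) < d - 2

/-- A matrix on the right hand side: the matrix of a finite path of Rauzy induction starting at
`π_R` in which the winner of every step lies in `{d-1, d}`. -/
def IsRHSMatrix (d : ℕ) (B : Matrix (Fin d) (Fin d) ℝ) : Prop :=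
  ∃ (z : Fin d → ℝ) (m : ℕ), (∀ i, 0 < z i) ∧ rauzyMat z (piR d) m = some B ∧
    ∀ k < m, ∀ w : Fin d, stepWin z (piR d) k = some w → d - 2 ≤ (w : ℕ)

/-- `V(M)`: the nonnegative span of the first `d-2` columns of `M`, intersected with `Δ`. -/
def Vface {d : ℕ} (M : Matrix (Fin d) (Fin d) ℝ) : Set (EuclideanSpace ℝ (Fin d)) :=
  {y | ∃ a : Fin d → ℝ, (∀ i, 0 ≤ a i) ∧ (∀ i : Fin d, d - 2 ≤ (i : ℕ) → a i = 0) ∧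
    (y : Fin d → ℝ) = M.mulVec a} ∩ openSimplex d

/-- `W(M)`: the nonnegative span of the last two columns of `M`, intersected with `Δ`. -/
def Wface {d : ℕ} (M : Matrix (Fin d) (Fin d) ℝ) : Set (EuclideanSpace ℝ (Fin d)) :=
  {y | ∃ a : Fin d → ℝ, (∀ i, 0 ≤ a i) ∧ (∀ i : Fin d, (i : ℕ) < d - 2 → a i = 0) ∧
    (y : Fin d → ℝ) = M.mulVec a} ∩ openSimplex d

/-- Left endpoint data: the sum of the lengths of the intervals preceding `ℓ` in the row `ρ`. -/
def ietLeft {d : ℕ} (x : Fin d → ℝ) (ρ : Equiv.Perm (Fin d)) (ℓ : Fin d) : ℝ :=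
  ∑ k ∈ Finset.univ.filter (fun k => ρ k < ρ ℓ), x k

/-- The subinterval `I_ℓ` of `[0,1)` corresponding to the symbol `ℓ`. -/
def ietInterval {d : ℕ} (x : Fin d → ℝ) (π : PermDatum d) (ℓ : Fin d) : Set ℝ :=
  Set.Ico (ietLeft x π.top ℓ) (ietLeft x π.top ℓ + x ℓ)

/-- The interval exchange transformation `T_{x,π}`. -/
def iet {d : ℕ} (x : Fin d → ℝ) (π : PermDatum d) : ℝ → ℝ := fun y => by
  classical exact
    if h : ∃ ℓ, y ∈ ietInterval x π ℓ then
      y - ietLeft x π.top (Classical.choose h) + ietLeft x π.bot (Classical.choose h)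
    else y

/-- Unique ergodicity: Lebesgue measure on `[0,1)` is the only `T`-invariant Borel
probability measure carried by `[0,1)`. -/
def UniquelyErgodic (T : ℝ → ℝ) : Prop :=
  ∀ μ : Measure ℝ, IsProbabilityMeasure μ → μ (Set.Ico (0 : ℝ) 1)ᶜ = 0 →
    (∀ s : Set ℝ, MeasurableSet s → μ (T ⁻¹' s) = μ s) →
    μ = volume.restrict (Set.Ico (0 : ℝ) 1)

/-- The set of non-uniquely ergodic interval exchange transformations with permutation `π`. -/
def NUE (d : ℕ) (π : PermDatum d) : Set (EuclideanSpace ℝ (Fin d)) :=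
  {x ∈ openSimplex d | ¬ UniquelyErgodic (iet x π)}

/-- The Rauzy move on permutation data in the case where the top symbol wins. -/
def topMove {d : ℕ} (π : PermDatum d) : PermDatum d :=
  if h : 0 < d then
    ⟨π.top, mkPerm (bumpRow π.bot (π.top.symm (lastIdx d h)) (π.bot.symm (lastIdx d h)))⟩
  else π

/-- The Rauzy move on permutation data in the case where the bottom symbol wins. -/
def botMove {d : ℕ} (π : PermDatum d) : PermDatum d :=
  if h : 0 < d then
    ⟨mkPerm (bumpRow π.top (π.bot.symm (lastIdx d h)) (π.top.symm (lastIdx d h))), π.bot⟩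
  else π

/-- The Rauzy class of the hyperelliptic permutation datum: the smallest set of permutation
data containing `π_s` and closed under both Rauzy moves. -/
inductive InRauzyClass (d : ℕ) : PermDatum d → Prop
  | base : InRauzyClass d (piS d)
  | top {π : PermDatum d} : InRauzyClass d π → InRauzyClass d (topMove π)
  | bot {π : PermDatum d} : InRauzyClass d π → InRauzyClass d (botMove π)

end


noncomputable section Aux
open Matrix

lemma winLose_ne {d : ℕ} {x : Fin d → ℝ} {π : PermDatum d} {w l : Fin d}
    (h : winLose x π = some (w, l)) : w ≠ l := by
  have hd : 0 < d := w.pos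
  simp only [winLose, dif_pos hd] at h
  split_ifs at h with h1 h2 <;>
    simp only [Option.some.injEq, Prod.mk.injEq] at h
  · obtain ⟨rfl, rfl⟩ := h
    intro he; rw [he] at h1; exact lt_irrefl _ h1
  · obtain ⟨rfl, rfl⟩ := h
    intro he; rw [he] at h2; exact lt_irrefl _ h2

lemma elemMatrix_nonneg {d : ℕ} (w l : Fin d) (i j : Fin d) : 0 ≤ elemMatrix w l i j := by
  classical
  simp only [elemMatrix, Matrix.add_apply, Matrix.one_apply, Matrix.single,
    Matrix.of_apply]
  split_ifs <;> norm_num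

lemma elemMatrix_det {d : ℕ} {w l : Fin d} (h : w ≠ l) : (elemMatrix w l).det = 1 := by
  classical
  have : elemMatrix w l = Matrix.transvection w l 1 := rfl
  rw [this, Matrix.det_transvection_of_ne w l h 1]

lemma rauzyMat_props {d : ℕ} {x : Fin d → ℝ} {π : PermDatum d} :
    ∀ n M, rauzyMat x π n = some M → (∀ i j, 0 ≤ M i j) ∧ M.det = 1 := by
  intro n
  induction n with
  | zero =>
      intro M hM
      simp only [rauzyMat, Option.some.injEq] at hM
      subst hM
      classical
      refine ⟨fun i j => ?_, Matrix.det_one⟩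
      simp only [Matrix.one_apply]; split_ifs <;> norm_num
  | succ n ih =>
      intro M hM
      simp only [rauzyMat] at hM
      obtain ⟨p, hp, hM⟩ := Option.bind_eq_some_iff.1 hM
      obtain ⟨wl, hwl, hM⟩ := Option.bind_eq_some_iff.1 hM
      obtain ⟨M₀, hM₀, rfl⟩ := Option.map_eq_some_iff.1 hM
      obtain ⟨hnn, hdet⟩ := ih M₀ hM₀
      have hne : wl.1 ≠ wl.2 := winLose_ne (w := wl.1) (l := wl.2) (by rw [hwl])
      constructor
      · intro i j
        rw [Matrix.mul_apply]
        exact Finset.sum_nonneg fun k _ => mul_nonneg (hnn i k) (elemMatrix_nonneg _ _ k j)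
      · rw [Matrix.det_mul, hdet, elemMatrix_det hne, one_mul]

lemma colSum_pos {d : ℕ} {M : Matrix (Fin d) (Fin d) ℝ} (hnn : ∀ i j, 0 ≤ M i j)
    (hdet : M.det = 1) (j : Fin d) : 0 < colSum M j := by
  rcases lt_or_ge 0 (colSum M j) with h | h
  · exact h
  · exfalso
    have h0 : colSum M j = 0 :=
      le_antisymm h (Finset.sum_nonneg fun i _ => hnn i j)
    have hz : ∀ i, M i j = 0 := fun i =>
      (Finset.sum_eq_zero_iff_of_nonneg (fun i _ => hnn i j)).1 h0 i (Finset.mem_univ i)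
    have := Matrix.det_eq_zero_of_column_eq_zero j hz
    rw [hdet] at this; norm_num at this

end Aux
noncomputable section Aux2
open Matrix

lemma sum_mulVec {d : ℕ} (M : Matrix (Fin d) (Fin d) ℝ) (v : Fin d → ℝ) :
    ∑ i, M.mulVec v i = ∑ j, colSum M j * v j := by
  simp only [Matrix.mulVec, dotProduct, colSum, Finset.sum_mul]
  exact Finset.sum_comm

lemma inv_mulVec_mulVec {d : ℕ} {M : Matrix (Fin d) (Fin d) ℝ} (hdet : M.det = 1)
    (v : Fin d → ℝ) : M⁻¹.mulVec (M.mulVec v) = v := by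
  rw [Matrix.mulVec_mulVec, Matrix.nonsing_inv_mul M (by rw [hdet]; exact isUnit_one),
    Matrix.one_mulVec]

lemma mulVec_inv_mulVec {d : ℕ} {M : Matrix (Fin d) (Fin d) ℝ} (hdet : M.det = 1)
    (v : Fin d → ℝ) : M.mulVec (M⁻¹.mulVec v) = v := by
  rw [Matrix.mulVec_mulVec, Matrix.mul_nonsing_inv M (by rw [hdet]; exact isUnit_one),
    Matrix.one_mulVec]

lemma projNorm_smul_eq {d : ℕ} {y : Fin d → ℝ} (hy : ∑ i, y i = 1) {t : ℝ} (ht : t ≠ 0) :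
    projNorm (t • y) = y := by
  have hsum : ∑ i, (t • y) i = t := by
    simp only [Pi.smul_apply, smul_eq_mul, ← Finset.mul_sum, hy, mul_one]
  rw [projNorm, hsum, smul_smul, inv_mul_cancel₀ ht, one_smul]

lemma mem_mapSimplex_iff {d : ℕ} (hd : 0 < d) {M : Matrix (Fin d) (Fin d) ℝ}
    (hnn : ∀ i j, 0 ≤ M i j) (hdet : M.det = 1) (y : EuclideanSpace ℝ (Fin d)) :
    y ∈ mapSimplex M ↔ (∑ i, y i = 1 ∧ ∀ i, 0 < M⁻¹.mulVec y i) := by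
  have hne : Nonempty (Fin d) := ⟨⟨0, hd⟩⟩
  constructor
  · rintro ⟨v, ⟨hvpos, hvsum⟩, hy⟩
    have hσ : 0 < ∑ i, M.mulVec v i := by
      rw [sum_mulVec]
      exact Finset.sum_pos (fun j _ => mul_pos (colSum_pos hnn hdet j) (hvpos j))
        Finset.univ_nonempty
    have hy' : (y : Fin d → ℝ) = (∑ i, M.mulVec v i)⁻¹ • M.mulVec v := hy
    constructor
    · rw [show (fun i => y i) = (y : Fin d → ℝ) from rfl] at *
      rw [hy']
      simp only [Pi.smul_apply, smul_eq_mul, ← Finset.mul_sum]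
      field_simp
    · intro i
      rw [hy', Matrix.mulVec_smul, inv_mulVec_mulVec hdet]
      exact smul_pos (inv_pos.2 hσ) (hvpos i)
  · rintro ⟨hsum, hpos⟩
    set w := M⁻¹.mulVec y with hw
    have hσw : 0 < ∑ i, w i := Finset.sum_pos (fun i _ => hpos i) Finset.univ_nonempty
    refine ⟨WithLp.toLp 2 ((∑ i, w i)⁻¹ • w), ⟨fun i => smul_pos (inv_pos.2 hσw) (hpos i), ?_⟩, ?_⟩
    · simp only [WithLp.ofLp_toLp, Pi.smul_apply, smul_eq_mul, ← Finset.mul_sum]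
      field_simp
    · rw [WithLp.ofLp_toLp, Matrix.mulVec_smul, mulVec_inv_mulVec hdet]
      exact (projNorm_smul_eq hsum (inv_ne_zero hσw.ne')).symm

lemma Rback_apply {d : ℕ} (M : Matrix (Fin d) (Fin d) ℝ) (y : Fin d → ℝ) (i : Fin d) :
    Rback M y i = (∑ j, M⁻¹.mulVec y j)⁻¹ * M⁻¹.mulVec y i := rfl

end Aux2
noncomputable section Aux3
open MeasureTheory Pointwise

/-- The open corner simplex `{v > 0, ∑ cᵢ vᵢ < r}` and its volume scaling. -/
def cornerSet {κ : Type*} [Fintype κ] (c : κ → ℝ) (r : ℝ) : Set (κ → ℝ) :=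
  {v | (∀ i, 0 < v i) ∧ ∑ i, c i * v i < r}

lemma cornerSet_smul {κ : Type*} [Fintype κ] (c : κ → ℝ) {r : ℝ} (hr : 0 < r) :
    cornerSet c r = r • cornerSet c 1 := by
  ext v
  rw [Set.mem_smul_set_iff_inv_smul_mem₀ hr.ne']
  constructor
  · rintro ⟨hpos, hsum⟩
    refine ⟨fun i => ?_, ?_⟩
    · simpa only [Pi.smul_apply, smul_eq_mul] using mul_pos (inv_pos.2 hr) (hpos i)
    · simp only [Pi.smul_apply, smul_eq_mul]
      have : ∑ i, c i * (r⁻¹ * v i) = r⁻¹ * ∑ i, c i * v i := by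
        rw [Finset.mul_sum]; congr 1; ext i; ring
      rw [this]
      rw [inv_mul_lt_iff₀ hr, mul_one]
      exact hsum
  · rintro ⟨hpos, hsum⟩
    simp only [Pi.smul_apply, smul_eq_mul] at hpos hsum
    refine ⟨fun i => ?_, ?_⟩
    · have := mul_pos hr (hpos i)
      rwa [mul_inv_cancel_left₀ hr.ne'] at this
    · have : ∑ i, c i * (r⁻¹ * v i) = r⁻¹ * ∑ i, c i * v i := by
        rw [Finset.mul_sum]; congr 1; ext i; ring
      rw [this, inv_mul_lt_iff₀ hr, mul_one] at hsum
      exact hsum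

lemma cornerSet_volume {κ : Type*} [Fintype κ] [Nonempty κ] (c : κ → ℝ) (hc : ∀ i, 0 < c i)
    {r : ℝ} (hr : 0 < r) :
    volume (cornerSet c r) = ENNReal.ofReal (r ^ Fintype.card κ) * volume (cornerSet c 1) := by
  rw [cornerSet_smul c hr, Measure.addHaar_smul, Module.finrank_pi,
    abs_of_pos (pow_pos hr _)]

lemma cornerSet_volume_pos {κ : Type*} [Fintype κ] [Nonempty κ] (c : κ → ℝ)
    (hc : ∀ i, 0 < c i) {r : ℝ} (hr : 0 < r) : 0 < volume (cornerSet c r) := by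
  have hopen : IsOpen (cornerSet c r) := by
    have h1 : IsOpen {v : κ → ℝ | ∀ i, 0 < v i} := by
      rw [show {v : κ → ℝ | ∀ i, 0 < v i} = ⋂ i, {v | 0 < v i} from by ext; simp]
      exact isOpen_iInter_of_finite fun i => isOpen_lt continuous_const (continuous_apply i)
    have h2 : IsOpen {v : κ → ℝ | ∑ i, c i * v i < r} :=
      isOpen_lt (by continuity) continuous_const
    exact h1.inter h2
  have hcsum : 0 < ∑ j, c j := Finset.sum_pos (fun j _ => hc j) Finset.univ_nonempty
  have hmem : (fun _ => r / (2 * ∑ j, c j)) ∈ cornerSet c r := by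
    constructor
    · intro i; positivity
    · have : ∑ i, c i * (r / (2 * ∑ j, c j)) = (∑ i, c i) * (r / (2 * ∑ j, c j)) := by
        rw [Finset.sum_mul]
      rw [this]
      rw [div_eq_mul_inv, ← mul_assoc]
      have h2 : (∑ i, c i) * r * (2 * ∑ j, c j)⁻¹ = r / 2 := by
        field_simp
      rw [h2]
      linarith
  exact hopen.measure_pos volume ⟨_, hmem⟩

lemma cornerSet_volume_lt_top {κ : Type*} [Fintype κ] (c : κ → ℝ) (hc : ∀ i, 0 < c i)
    {r : ℝ} (hr : 0 < r) : volume (cornerSet c r) < ⊤ := by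
  have hsub : cornerSet c r ⊆ Metric.closedBall 0 (∑ i, r / c i) := by
    rintro v ⟨hpos, hsum⟩
    rw [Metric.mem_closedBall, dist_zero_right]
    have hR : (0:ℝ) ≤ ∑ j, r / c j :=
      Finset.sum_nonneg fun j _ => (div_pos hr (hc j)).le
    have hle : ∀ i, ‖v i‖ ≤ ∑ j, r / c j := by
      intro i
      have h1 : c i * v i < r := by
        have : ∑ j, c j * v j ≥ c i * v i := by
          exact Finset.single_le_sum (fun j _ => (mul_pos (hc j) (hpos j)).le)
            (Finset.mem_univ i)
        linarith
      have h2 : v i < r / c i := (lt_div_iff₀ (hc i)).2 (by linarith [mul_comm (c i) (v i)])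
      have h3 : r / c i ≤ ∑ j, r / c j :=
        Finset.single_le_sum (f := fun j => r / c j) (fun j _ => (div_pos hr (hc j)).le) (Finset.mem_univ i)
      rw [Real.norm_eq_abs, abs_of_pos (hpos i)]
      linarith
    exact pi_norm_le_iff_of_nonneg hR |>.2 hle
  exact ((Metric.isBounded_closedBall).subset hsub).measure_lt_top

end Aux3
noncomputable section Aux4
open MeasureTheory Pointwise

def coneSet {n : ℕ} (S : Set (Fin n → ℝ)) : Set (Fin n → ℝ) :=
  {z | ∃ t ∈ Set.Ioc (0:ℝ) 1, ∃ y ∈ S, z = t • y}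

def hconeSet {n : ℕ} (S : Set (Fin n → ℝ)) : Set (Fin n → ℝ) :=
  {z | ∃ t ∈ Set.Ioc (1/2:ℝ) 1, ∃ y ∈ S, z = t • y}

lemma hconeSet_subset_coneSet {n : ℕ} (S : Set (Fin n → ℝ)) : hconeSet S ⊆ coneSet S := by
  rintro z ⟨t, ⟨ht1, ht2⟩, y, hy, rfl⟩
  exact ⟨t, ⟨by linarith, ht2⟩, y, hy, rfl⟩

lemma coneSet_subset_iUnion {n : ℕ} (S : Set (Fin n → ℝ)) :
    coneSet S ⊆ ⋃ k : ℕ, ((2:ℝ)⁻¹) ^ k • hconeSet S := by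
  rintro z ⟨t, ⟨ht0, ht1⟩, y, hy, rfl⟩
  have hk : ∃ k : ℕ, 1/2 < 2 ^ k * t := by
    obtain ⟨k, hk⟩ := pow_unbounded_of_one_lt (R := ℝ) (1 / (2 * t)) one_lt_two
    exact ⟨k, by rw [div_lt_iff₀ (by positivity)] at hk; nlinarith⟩
  classical
  let k := Nat.find hk
  have hk1 : 1/2 < 2 ^ k * t := Nat.find_spec hk
  have hk2 : 2 ^ k * t ≤ 1 := by
    rcases Nat.eq_zero_or_pos k with h0 | h0
    · simp [h0]; linarith
    · have := Nat.find_min hk (m := k - 1) (by omega)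
      push_neg at this
      have h2 : (2:ℝ) ^ k = 2 * 2 ^ (k-1) := by
        rw [← pow_succ']; congr 1; omega
      rw [h2]; nlinarith
  refine Set.mem_iUnion.2 ⟨k, ?_⟩
  refine ⟨(2 ^ k * t) • y, ⟨2 ^ k * t, ⟨hk1, hk2⟩, y, hy, rfl⟩, ?_⟩
  show (2:ℝ)⁻¹ ^ k • ((2 ^ k * t) • y) = t • y
  rw [smul_smul, ← mul_assoc, ← mul_pow, inv_mul_cancel₀ (two_ne_zero), one_pow, one_mul]

lemma volume_coneSet_le {n : ℕ} (hn : 0 < n) (S : Set (Fin n → ℝ)) :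
    volume (coneSet S) ≤ 2 * volume (hconeSet S) := by
  calc volume (coneSet S) ≤ volume (⋃ k : ℕ, ((2:ℝ)⁻¹) ^ k • hconeSet S) :=
        measure_mono (coneSet_subset_iUnion S)
    _ ≤ ∑' k : ℕ, volume (((2:ℝ)⁻¹) ^ k • hconeSet S) := measure_iUnion_le _
    _ ≤ ∑' k : ℕ, (2⁻¹ : ℝ≥0∞) ^ k * volume (hconeSet S) := by
        refine ENNReal.tsum_le_tsum fun k => ?_
        rw [Measure.addHaar_smul, Module.finrank_pi, Fintype.card_fin]
        refine mul_le_mul_left ?_ _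
        rw [abs_of_pos (by positivity)]
        calc ENNReal.ofReal (((2:ℝ)⁻¹ ^ k) ^ n) ≤ ENNReal.ofReal ((2:ℝ)⁻¹ ^ k) := by
              refine ENNReal.ofReal_le_ofReal ?_
              refine pow_le_of_le_one (by positivity) ?_ hn.ne'
              exact pow_le_one₀ (by norm_num) (by norm_num)
          _ = (2⁻¹ : ℝ≥0∞) ^ k := by
              rw [ENNReal.ofReal_pow (by norm_num)]
              congr 1
              rw [ENNReal.ofReal_inv_of_pos (by norm_num)]
              norm_num
    _ = (∑' k : ℕ, (2⁻¹ : ℝ≥0∞) ^ k) * volume (hconeSet S) := by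
        rw [ENNReal.tsum_mul_right]
    _ = 2 * volume (hconeSet S) := by
        rw [ENNReal.tsum_geometric]
        congr 1
        rw [← ENNReal.one_sub_inv_two]
        simp [ENNReal.sub_sub_cancel]

end Aux4
noncomputable section Aux5
open MeasureTheory

def psiT {m : ℕ} (u : Fin m → ℝ) : Fin (m+1) → ℝ := Fin.snoc u (1 - ∑ i, u i)

def Ghat {m : ℕ} (w : Fin (m+1) → ℝ) : Fin (m+1) → ℝ := w (Fin.last m) • psiT (Fin.init w)

def Fhat {m : ℕ} (z : Fin (m+1) → ℝ) : Fin (m+1) → ℝ :=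
  Fin.snoc (fun i => z i.castSucc / ∑ j, z j) (∑ j, z j)

def Hpos (m : ℕ) : Set (Fin (m+1) → ℝ) := {y | (∀ i, 0 ≤ y i) ∧ ∑ i, y i = 1}

def Bset {m : ℕ} (S : Set (Fin (m+1) → ℝ)) : Set (Fin m → ℝ) := psiT ⁻¹' S

def Bset' {m : ℕ} (S : Set (Fin (m+1) → ℝ)) : Set (Fin (m+1) → ℝ) :=
  {w | w (Fin.last m) ∈ Set.Ioc (1/2:ℝ) 1 ∧ psiT (Fin.init w) ∈ S}

lemma psiT_castSucc {m : ℕ} (u : Fin m → ℝ) (j : Fin m) : psiT u j.castSucc = u j := by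
  simp [psiT]

lemma psiT_last {m : ℕ} (u : Fin m → ℝ) : psiT u (Fin.last m) = 1 - ∑ i, u i := by
  simp [psiT]

lemma sum_psiT {m : ℕ} (u : Fin m → ℝ) : ∑ i, psiT u i = 1 := by
  rw [Fin.sum_univ_castSucc]
  simp only [psiT_castSucc, psiT_last]
  ring

lemma psiT_init {m : ℕ} {y : Fin (m+1) → ℝ} (hy : ∑ i, y i = 1) : psiT (Fin.init y) = y := by
  have hsum : ∑ i : Fin m, Fin.init y i = ∑ i : Fin m, y i.castSucc := rfl
  ext i
  refine Fin.lastCases ?_ ?_ i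
  · rw [psiT_last, hsum]
    rw [Fin.sum_univ_castSucc] at hy
    linarith
  · intro j
    rw [psiT_castSucc]
    rfl

lemma mem_Hpos_le_one {m : ℕ} {y : Fin (m+1) → ℝ} (hy : y ∈ Hpos m) (i : Fin (m+1)) :
    y i ≤ 1 := by
  obtain ⟨hpos, hsum⟩ := hy
  calc y i ≤ ∑ j, y j := Finset.single_le_sum (fun j _ => hpos j) (Finset.mem_univ i)
    _ = 1 := hsum

lemma hconeSet_eq_image {m : ℕ} {S : Set (Fin (m+1) → ℝ)} (hS : S ⊆ Hpos m) :
    hconeSet S = Ghat '' Bset' S := by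
  ext z
  constructor
  · rintro ⟨t, ht, y, hy, rfl⟩
    refine ⟨Fin.snoc (Fin.init y) t, ⟨?_, ?_⟩, ?_⟩
    · rw [Fin.snoc_last]; exact ht
    · rw [Fin.init_snoc, psiT_init (hS hy).2]; exact hy
    · rw [Ghat, Fin.snoc_last, Fin.init_snoc, psiT_init (hS hy).2]
  · rintro ⟨w, ⟨hw1, hw2⟩, rfl⟩
    exact ⟨w (Fin.last m), hw1, psiT (Fin.init w), hw2, rfl⟩

lemma sum_Ghat {m : ℕ} (w : Fin (m+1) → ℝ) : ∑ i, Ghat w i = w (Fin.last m) := by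
  rw [Ghat]
  simp only [Pi.smul_apply, smul_eq_mul, ← Finset.mul_sum, sum_psiT, mul_one]

lemma Fhat_Ghat {m : ℕ} {w : Fin (m+1) → ℝ} (hw : w (Fin.last m) ≠ 0) : Fhat (Ghat w) = w := by
  have hsum : ∑ j, Ghat w j = w (Fin.last m) := sum_Ghat w
  ext i
  refine Fin.lastCases ?_ ?_ i
  · rw [Fhat, Fin.snoc_last, hsum]
  · intro j
    rw [Fhat, Fin.snoc_castSucc, hsum]
    have : Ghat w j.castSucc = w (Fin.last m) * w j.castSucc := by
      rw [Ghat, Pi.smul_apply, smul_eq_mul, psiT_castSucc]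
      rfl
    rw [this, mul_div_cancel_left₀ _ hw]

lemma Bset'_subset_image {m : ℕ} {S : Set (Fin (m+1) → ℝ)} (hS : S ⊆ Hpos m) :
    Bset' S ⊆ Fhat '' hconeSet S := by
  intro w hw
  refine ⟨Ghat w, ?_, Fhat_Ghat (by have := hw.1.1; intro h; rw [h] at this; norm_num at this)⟩
  rw [hconeSet_eq_image hS]
  exact ⟨w, hw, rfl⟩

lemma volume_Bset' {m : ℕ} (S : Set (Fin (m+1) → ℝ)) :
    volume (Bset' S) = ENNReal.ofReal (1/2) * volume (Bset S) := by
  classical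
  set e := MeasurableEquiv.piFinSuccAbove (fun _ : Fin (m+1) => ℝ) (Fin.last m) with he
  have hB : Bset' S = e ⁻¹' (Set.Ioc (1/2:ℝ) 1 ×ˢ Bset S) := by
    ext w
    have h1 : e w = (w (Fin.last m), Fin.init w) := by
      show (w (Fin.last m), (Fin.last m).removeNth w) = _
      congr 1
      ext j
      show w ((Fin.last m).succAbove j) = w j.castSucc
      rw [Fin.succAbove_last]
    simp only [Set.mem_preimage, h1, Set.mem_prod, Bset', Bset, Set.mem_setOf_eq,
      Set.mem_preimage]
  rw [hB]
  have h2 : volume (e ⁻¹' (Set.Ioc (1/2:ℝ) 1 ×ˢ Bset S)) =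
      volume (Set.Ioc (1/2:ℝ) 1 ×ˢ Bset S) := by
    rw [← MeasurableEquiv.map_apply e, (volume_preserving_piFinSuccAbove _ _).map_eq]
  rw [h2, Measure.volume_eq_prod, Measure.prod_prod, Real.volume_Ioc]
  norm_num

end Aux5
noncomputable section Aux6
open MeasureTheory NNReal

lemma abs_sum_sub_le {κ : Type*} [Fintype κ] (u u' : κ → ℝ) :
    |∑ i, u i - ∑ i, u' i| ≤ (Fintype.card κ : ℝ) * dist u u' := by
  rw [← Finset.sum_sub_distrib]
  calc |∑ i, (u i - u' i)| ≤ ∑ i, |u i - u' i| := Finset.abs_sum_le_sum_abs _ _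
    _ ≤ ∑ _i : κ, dist u u' := by
        refine Finset.sum_le_sum fun i _ => ?_
        rw [← Real.dist_eq]
        exact dist_le_pi_dist u u' i
    _ = (Fintype.card κ : ℝ) * dist u u' := by
        rw [Finset.sum_const, Finset.card_univ, nsmul_eq_mul]

lemma lipschitz_psiT {m : ℕ} : LipschitzWith ((m+2 : ℕ) : ℝ≥0) (psiT (m := m)) := by
  apply LipschitzWith.of_dist_le_mul
  intro u u'
  have hd : (0:ℝ) ≤ dist u u' := dist_nonneg
  have hK : (((m+2 : ℕ) : ℝ≥0) : ℝ) = (m:ℝ) + 2 := by push_cast; ring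
  rw [hK]
  rw [dist_pi_le_iff (by positivity)]
  intro i
  refine Fin.lastCases ?_ ?_ i
  · rw [psiT_last, psiT_last, Real.dist_eq]
    have h1 : |(1 - ∑ i, u i) - (1 - ∑ i, u' i)| = |∑ i, u' i - ∑ i, u i| := by
      congr 1; ring
    rw [h1]
    calc |∑ i, u' i - ∑ i, u i| ≤ (Fintype.card (Fin m) : ℝ) * dist u' u :=
          abs_sum_sub_le u' u
      _ = (m : ℝ) * dist u u' := by rw [Fintype.card_fin, dist_comm]
      _ ≤ ((m:ℝ) + 2) * dist u u' := by nlinarith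
  · intro j
    rw [psiT_castSucc, psiT_castSucc]
    calc dist (u j) (u' j) ≤ dist u u' := dist_le_pi_dist u u' j
      _ ≤ ((m:ℝ) + 2) * dist u u' := by nlinarith

lemma lipschitz_init {m : ℕ} : LipschitzWith 1 (Fin.init : (Fin (m+1) → ℝ) → (Fin m → ℝ)) := by
  apply LipschitzWith.of_dist_le_mul
  intro w w'
  rw [NNReal.coe_one, one_mul, dist_pi_le_iff dist_nonneg]
  intro j
  exact dist_le_pi_dist w w' j.castSucc

def DGset (m : ℕ) : Set (Fin (m+1) → ℝ) := {w | ∀ i, 0 ≤ w i ∧ w i ≤ 1}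

def DFset (m : ℕ) : Set (Fin (m+1) → ℝ) :=
  {z | (∀ i, 0 ≤ z i ∧ z i ≤ 1) ∧ (1/2 < ∑ i, z i ∧ ∑ i, z i ≤ 1)}

lemma Ghat_castSucc {m : ℕ} (w : Fin (m+1) → ℝ) (j : Fin m) :
    Ghat w j.castSucc = w (Fin.last m) * w j.castSucc := by
  rw [Ghat, Pi.smul_apply, smul_eq_mul, psiT_castSucc]; rfl

lemma Ghat_last {m : ℕ} (w : Fin (m+1) → ℝ) :
    Ghat w (Fin.last m) = w (Fin.last m) * (1 - ∑ j : Fin m, w j.castSucc) := by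
  rw [Ghat, Pi.smul_apply, smul_eq_mul, psiT_last]; rfl

set_option maxHeartbeats 1000000 in
lemma lipschitzOn_Ghat {m : ℕ} :
    LipschitzOnWith ((2*(m+2) : ℕ) : ℝ≥0) (Ghat (m := m)) (DGset m) := by
  rw [lipschitzOnWith_iff_dist_le_mul]
  intro w hw w' hw'
  have hd : (0:ℝ) ≤ dist w w' := dist_nonneg
  have hK : (((2*(m+2) : ℕ) : ℝ≥0) : ℝ) = 2*((m:ℝ)+2) := by push_cast; ring
  rw [hK, dist_pi_le_iff (by positivity)]
  intro i
  have hcoord : ∀ i, dist (w i) (w' i) ≤ dist w w' := fun i => dist_le_pi_dist w w' i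
  have hwi := hw (Fin.last m); have hwi' := hw' (Fin.last m)
  refine Fin.lastCases ?_ ?_ i
  · rw [Ghat_last, Ghat_last, Real.dist_eq]
    set σ := ∑ j : Fin m, w j.castSucc with hσ
    set σ' := ∑ j : Fin m, w' j.castSucc with hσ'
    have hσd : |σ - σ'| ≤ (m:ℝ) * dist w w' := by
      have := abs_sum_sub_le (fun j : Fin m => w j.castSucc) (fun j : Fin m => w' j.castSucc)
      rw [Fintype.card_fin] at this
      refine this.trans ?_
      have : dist (fun j : Fin m => w j.castSucc) (fun j : Fin m => w' j.castSucc)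
          ≤ dist w w' := by
        rw [dist_pi_le_iff hd]
        intro j; exact hcoord j.castSucc
      nlinarith
    have hσ'b : |1 - σ'| ≤ (m:ℝ) + 1 := by
      have h1 : 0 ≤ σ' := Finset.sum_nonneg fun j _ => (hw' j.castSucc).1
      have h2 : σ' ≤ (m:ℝ) := by
        calc σ' ≤ ∑ _j : Fin m, (1:ℝ) := Finset.sum_le_sum fun j _ => (hw' j.castSucc).2
          _ = (m:ℝ) := by simp
      rw [abs_le]; constructor <;> nlinarith
    have key : w (Fin.last m) * (1 - σ) - w' (Fin.last m) * (1 - σ') =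
        w (Fin.last m) * (σ' - σ) + (1 - σ') * (w (Fin.last m) - w' (Fin.last m)) := by ring
    rw [key]
    have hdl := hcoord (Fin.last m)
    rw [Real.dist_eq] at hdl
    calc |w (Fin.last m) * (σ' - σ) + (1 - σ') * (w (Fin.last m) - w' (Fin.last m))|
        ≤ |w (Fin.last m) * (σ' - σ)| + |(1 - σ') * (w (Fin.last m) - w' (Fin.last m))| :=
          abs_add_le _ _
      _ = |w (Fin.last m)| * |σ' - σ| + |1 - σ'| * |w (Fin.last m) - w' (Fin.last m)| := by
          rw [abs_mul, abs_mul]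
      _ ≤ 1 * ((m:ℝ) * dist w w') + ((m:ℝ)+1) * dist w w' := by
          have h1 : |w (Fin.last m)| ≤ 1 := by rw [abs_le]; constructor <;> nlinarith
          have h2 : |σ' - σ| ≤ (m:ℝ) * dist w w' := by rw [abs_sub_comm]; exact hσd
          have h3 : (0:ℝ) ≤ |σ' - σ| := abs_nonneg _
          nlinarith [abs_nonneg (w (Fin.last m)), abs_nonneg (1 - σ'),
            abs_nonneg (w (Fin.last m) - w' (Fin.last m)), mul_le_mul h1 h2 h3 zero_le_one,
            mul_le_mul hσ'b hdl (abs_nonneg _) (by positivity : (0:ℝ) ≤ (m:ℝ)+1)]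
      _ ≤ 2*((m:ℝ)+2) * dist w w' := by nlinarith
  · intro j
    rw [Ghat_castSucc, Ghat_castSucc, Real.dist_eq]
    have key : w (Fin.last m) * w j.castSucc - w' (Fin.last m) * w' j.castSucc =
        w (Fin.last m) * (w j.castSucc - w' j.castSucc) +
          w' j.castSucc * (w (Fin.last m) - w' (Fin.last m)) := by ring
    rw [key]
    have h1 : |w (Fin.last m)| ≤ 1 := by
      rw [abs_le]; constructor <;> nlinarith
    have h2 : |w' j.castSucc| ≤ 1 := by
      have := hw' j.castSucc; rw [abs_le]; constructor <;> nlinarith [this.1, this.2]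
    have hdj := hcoord j.castSucc; rw [Real.dist_eq] at hdj
    have hdl := hcoord (Fin.last m); rw [Real.dist_eq] at hdl
    calc |w (Fin.last m) * (w j.castSucc - w' j.castSucc) +
          w' j.castSucc * (w (Fin.last m) - w' (Fin.last m))|
        ≤ |w (Fin.last m)| * |w j.castSucc - w' j.castSucc| +
          |w' j.castSucc| * |w (Fin.last m) - w' (Fin.last m)| := by
          refine (abs_add_le _ _).trans ?_
          rw [abs_mul, abs_mul]
      _ ≤ 1 * dist w w' + 1 * dist w w' := by
          have := abs_nonneg (w j.castSucc - w' j.castSucc)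
          have := abs_nonneg (w (Fin.last m) - w' (Fin.last m))
          nlinarith [abs_nonneg (w (Fin.last m)), abs_nonneg (w' j.castSucc)]
      _ ≤ 2*((m:ℝ)+2) * dist w w' := by nlinarith

lemma Fhat_castSucc {m : ℕ} (z : Fin (m+1) → ℝ) (j : Fin m) :
    Fhat z j.castSucc = z j.castSucc / ∑ i, z i := by
  rw [Fhat, Fin.snoc_castSucc]

lemma Fhat_last {m : ℕ} (z : Fin (m+1) → ℝ) : Fhat z (Fin.last m) = ∑ i, z i := by
  rw [Fhat, Fin.snoc_last]

set_option maxHeartbeats 1000000 in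
lemma lipschitzOn_Fhat {m : ℕ} :
    LipschitzOnWith ((8*(m+2) : ℕ) : ℝ≥0) (Fhat (m := m)) (DFset m) := by
  rw [lipschitzOnWith_iff_dist_le_mul]
  intro z hz z' hz'
  obtain ⟨hz1, hz2, hz3⟩ := hz
  obtain ⟨hz1', hz2', hz3'⟩ := hz'
  have hd : (0:ℝ) ≤ dist z z' := dist_nonneg
  have hK : (((8*(m+2) : ℕ) : ℝ≥0) : ℝ) = 8*((m:ℝ)+2) := by push_cast; ring
  rw [hK, dist_pi_le_iff (by positivity)]
  have hcoord : ∀ i, |z i - z' i| ≤ dist z z' := fun i => by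
    rw [← Real.dist_eq]; exact dist_le_pi_dist z z' i
  set s := ∑ i, z i with hs
  set s' := ∑ i, z' i with hs'
  have hsd : |s - s'| ≤ ((m:ℝ)+1) * dist z z' := by
    have := abs_sum_sub_le z z'
    rw [Fintype.card_fin] at this
    refine this.trans ?_
    push_cast
    nlinarith
  intro i
  refine Fin.lastCases ?_ ?_ i
  · rw [Fhat_last, Fhat_last, Real.dist_eq, ← hs, ← hs']
    nlinarith [abs_nonneg (s - s')]
  · intro j
    rw [Fhat_castSucc, Fhat_castSucc, Real.dist_eq, ← hs, ← hs']
    set a := z j.castSucc with ha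
    set a' := z' j.castSucc with ha'
    have hsne : s ≠ 0 := by nlinarith
    have hsne' : s' ≠ 0 := by nlinarith
    have key : a / s - a' / s' = (a * s' - a' * s) / (s * s') := by
      field_simp
    rw [key, abs_div]
    have hss' : (1:ℝ)/4 < s * s' := by nlinarith
    have habs : |s * s'| = s * s' := abs_of_pos (by nlinarith)
    rw [habs]
    have hnum : |a * s' - a' * s| ≤ |a - a'| + |s' - s| := by
      have key2 : a * s' - a' * s = (a - a') * s' + a' * (s' - s) := by ring
      rw [key2]
      have h1 : |(a - a') * s'| ≤ |a - a'| := by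
        rw [abs_mul]
        have : |s'| ≤ 1 := by rw [abs_le]; constructor <;> nlinarith
        nlinarith [abs_nonneg (a - a')]
      have h2 : |a' * (s' - s)| ≤ |s' - s| := by
        rw [abs_mul]
        have : |a'| ≤ 1 := by
          have := hz1' j.castSucc
          rw [abs_le]; constructor <;> nlinarith [this.1, this.2]
        nlinarith [abs_nonneg (s' - s)]
      calc |(a - a') * s' + a' * (s' - s)| ≤ |(a - a') * s'| + |a' * (s' - s)| := abs_add_le _ _
        _ ≤ |a - a'| + |s' - s| := by linarith
    have hfrac : |a * s' - a' * s| / (s * s') ≤ 4 * |a * s' - a' * s| := by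
      have hx : (0:ℝ) ≤ |a * s' - a' * s| := abs_nonneg _
      have hpos : (0:ℝ) < s * s' := by nlinarith
      rw [div_le_iff₀ hpos]
      have h14 : |a * s' - a' * s| * (1/4) ≤ |a * s' - a' * s| * (s * s') :=
        mul_le_mul_of_nonneg_left hss'.le hx
      linarith
    have hxle : |a * s' - a' * s| ≤ ((m:ℝ)+2) * dist z z' := by
      have h4 : |s' - s| ≤ ((m:ℝ)+1) * dist z z' := by rw [abs_sub_comm]; exact hsd
      have h5 : |a - a'| ≤ dist z z' := hcoord j.castSucc
      linarith
    calc |a * s' - a' * s| / (s * s') ≤ 4 * |a * s' - a' * s| := hfrac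
      _ ≤ 4 * (((m:ℝ)+2) * dist z z') := by linarith
      _ ≤ 8*((m:ℝ)+2) * dist z z' := by
          nlinarith [mul_nonneg (by positivity : (0:ℝ) ≤ (m:ℝ)+2) hd]

end Aux6
noncomputable section Aux7
open MeasureTheory NNReal

lemma muH_pi_eq_volume (n : ℕ) : (μH[(n:ℝ)] : Measure (Fin n → ℝ)) = volume := by
  conv_lhs => rw [show ((n:ℝ)) = ((Fintype.card (Fin n) : ℕ) : ℝ) by rw [Fintype.card_fin]]
  exact hausdorffMeasure_pi_real

lemma psiT_image_Bset {m : ℕ} {S : Set (Fin (m+1) → ℝ)} (hS : S ⊆ Hpos m) :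
    psiT '' Bset S = S := by
  rw [Bset, Set.image_preimage_eq_inter_range]
  apply Set.inter_eq_self_of_subset_left
  intro y hy
  exact ⟨Fin.init y, psiT_init (hS hy).2⟩

lemma Bset_eq_init_image {m : ℕ} {S : Set (Fin (m+1) → ℝ)} (hS : S ⊆ Hpos m) :
    Bset S = Fin.init '' S := by
  ext u
  constructor
  · intro hu
    refine ⟨psiT u, hu, ?_⟩
    rw [psiT, Fin.init_snoc]
  · rintro ⟨y, hy, rfl⟩
    show psiT (Fin.init y) ∈ S
    rw [psiT_init (hS hy).2]
    exact hy

lemma hcone_subset_DF {m : ℕ} {S : Set (Fin (m+1) → ℝ)} (hS : S ⊆ Hpos m) :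
    hconeSet S ⊆ DFset m := by
  rintro z ⟨t, ⟨ht1, ht2⟩, y, hy, rfl⟩
  have hy' := hS hy
  have hsum : ∑ i, (t • y) i = t := by
    simp only [Pi.smul_apply, smul_eq_mul, ← Finset.mul_sum, hy'.2, mul_one]
  refine ⟨fun i => ?_, ?_, ?_⟩
  · constructor
    · exact mul_nonneg (by linarith) (hy'.1 i)
    · exact mul_le_one₀ ht2 (hy'.1 i) (mem_Hpos_le_one hy' i)
  · rw [hsum]; exact ht1
  · rw [hsum]; exact ht2

lemma Bset'_subset_DG {m : ℕ} {S : Set (Fin (m+1) → ℝ)} (hS : S ⊆ Hpos m) :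
    Bset' S ⊆ DGset m := by
  rintro w ⟨hw1, hw2⟩
  have hy' := hS hw2
  intro i
  refine Fin.lastCases ?_ ?_ i
  · exact ⟨by linarith [hw1.1], hw1.2⟩
  · intro j
    have h1 := hy'.1 j.castSucc
    have h2 := mem_Hpos_le_one hy' j.castSucc
    rw [psiT_castSucc] at h1 h2
    exact ⟨h1, h2⟩

lemma cone_muH_comparison (m : ℕ) : ∃ C : ℝ≥0∞, 0 < C ∧ C < ⊤ ∧
    (∀ S ⊆ Hpos m, μH[(m:ℝ)] S ≤ C * volume (coneSet S)) ∧
    (∀ S ⊆ Hpos m, volume (coneSet S) ≤ C * μH[(m:ℝ)] S) := by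
  set KF : ℝ≥0 := ((8*(m+2) : ℕ) : ℝ≥0) with hKF
  set KG : ℝ≥0 := ((2*(m+2) : ℕ) : ℝ≥0) with hKG
  set Kψ : ℝ≥0 := ((m+2 : ℕ) : ℝ≥0) with hKψ
  set C1 : ℝ≥0∞ := (Kψ : ℝ≥0∞) ^ (m:ℝ) * 2 * (KF : ℝ≥0∞) ^ (((m+1:ℕ)):ℝ) with hC1
  set C2 : ℝ≥0∞ := 2 * (KG : ℝ≥0∞) ^ (((m+1:ℕ)):ℝ) with hC2
  have hC1top : C1 < ⊤ := by
    rw [hC1]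
    refine ENNReal.mul_lt_top (ENNReal.mul_lt_top ?_ (by norm_num)) ?_ <;>
      exact ENNReal.rpow_lt_top_of_nonneg (by positivity) ENNReal.coe_ne_top
  have hC2top : C2 < ⊤ := by
    rw [hC2]
    refine ENNReal.mul_lt_top (by norm_num) ?_
    exact ENNReal.rpow_lt_top_of_nonneg (by positivity) ENNReal.coe_ne_top
  refine ⟨C1 + C2 + 1, lt_of_lt_of_le zero_lt_one le_add_self, ?_, ?_, ?_⟩
  · have := ENNReal.add_lt_top.2 ⟨ENNReal.add_lt_top.2 ⟨hC1top, hC2top⟩, (by norm_num : (1:ℝ≥0∞) < ⊤)⟩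
    exact this
  · -- upper bound : μH ≤ C * vol cone
    intro S hS
    have h12 : ENNReal.ofReal (1/2) = (2⁻¹ : ℝ≥0∞) := by
      rw [show (1/2 : ℝ) = 2⁻¹ by norm_num, ENNReal.ofReal_inv_of_pos (by norm_num)]
      norm_num
    have step1 : μH[(m:ℝ)] S ≤ (Kψ : ℝ≥0∞) ^ (m:ℝ) * volume (Bset S) := by
      calc μH[(m:ℝ)] S = μH[(m:ℝ)] (psiT '' Bset S) := by rw [psiT_image_Bset hS]
        _ ≤ (Kψ : ℝ≥0∞) ^ (m:ℝ) * μH[(m:ℝ)] (Bset S) :=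
            lipschitz_psiT.hausdorffMeasure_image_le (by positivity) _
        _ = (Kψ : ℝ≥0∞) ^ (m:ℝ) * volume (Bset S) := by rw [muH_pi_eq_volume]
    have step2 : volume (Bset S) = 2 * volume (Bset' S) := by
      rw [volume_Bset' S, h12, ← mul_assoc, ENNReal.mul_inv_cancel (by norm_num) (by norm_num),
        one_mul]
    have step3 : volume (Bset' S) ≤ (KF : ℝ≥0∞) ^ (((m+1:ℕ)):ℝ) * volume (hconeSet S) := by
      calc volume (Bset' S) ≤ volume (Fhat '' hconeSet S) :=
            measure_mono (Bset'_subset_image hS)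
        _ = μH[((m+1:ℕ):ℝ)] (Fhat '' hconeSet S) := by rw [muH_pi_eq_volume]
        _ ≤ (KF : ℝ≥0∞) ^ (((m+1:ℕ)):ℝ) * μH[((m+1:ℕ):ℝ)] (hconeSet S) :=
            (lipschitzOn_Fhat.mono (hcone_subset_DF hS)).hausdorffMeasure_image_le
              (by positivity)
        _ = (KF : ℝ≥0∞) ^ (((m+1:ℕ)):ℝ) * volume (hconeSet S) := by rw [muH_pi_eq_volume]
    have step4 : volume (hconeSet S) ≤ volume (coneSet S) :=
      measure_mono (hconeSet_subset_coneSet S)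
    calc μH[(m:ℝ)] S ≤ (Kψ : ℝ≥0∞) ^ (m:ℝ) * volume (Bset S) := step1
      _ = (Kψ : ℝ≥0∞) ^ (m:ℝ) * 2 * volume (Bset' S) := by rw [step2, mul_assoc]
      _ ≤ (Kψ : ℝ≥0∞) ^ (m:ℝ) * 2 * ((KF : ℝ≥0∞) ^ (((m+1:ℕ)):ℝ) * volume (hconeSet S)) :=
          mul_le_mul_right step3 _
      _ = C1 * volume (hconeSet S) := by rw [hC1]; ring
      _ ≤ C1 * volume (coneSet S) := mul_le_mul_right step4 _
      _ ≤ (C1 + C2 + 1) * volume (coneSet S) := by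
          refine mul_le_mul_left ?_ _
          calc C1 ≤ C1 + C2 := le_self_add
            _ ≤ C1 + C2 + 1 := le_self_add
  · -- lower bound : vol cone ≤ C * μH
    intro S hS
    have h12 : ENNReal.ofReal (1/2) = (2⁻¹ : ℝ≥0∞) := by
      rw [show (1/2 : ℝ) = 2⁻¹ by norm_num, ENNReal.ofReal_inv_of_pos (by norm_num)]
      norm_num
    have hm1 : 0 < m + 1 := Nat.succ_pos m
    have step1 : volume (coneSet S) ≤ 2 * volume (hconeSet S) := volume_coneSet_le hm1 S
    have step2 : volume (hconeSet S) ≤ (KG : ℝ≥0∞) ^ (((m+1:ℕ)):ℝ) * volume (Bset' S) := by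
      calc volume (hconeSet S) = volume (Ghat '' Bset' S) := by rw [hconeSet_eq_image hS]
        _ = μH[((m+1:ℕ):ℝ)] (Ghat '' Bset' S) := by rw [muH_pi_eq_volume]
        _ ≤ (KG : ℝ≥0∞) ^ (((m+1:ℕ)):ℝ) * μH[((m+1:ℕ):ℝ)] (Bset' S) :=
            (lipschitzOn_Ghat.mono (Bset'_subset_DG hS)).hausdorffMeasure_image_le
              (by positivity)
        _ = (KG : ℝ≥0∞) ^ (((m+1:ℕ)):ℝ) * volume (Bset' S) := by rw [muH_pi_eq_volume]
    have step3 : volume (Bset' S) ≤ volume (Bset S) := by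
      rw [volume_Bset' S, h12]
      calc (2⁻¹ : ℝ≥0∞) * volume (Bset S) ≤ 1 * volume (Bset S) :=
            mul_le_mul_left (by norm_num) _
        _ = volume (Bset S) := one_mul _
    have step4 : volume (Bset S) ≤ μH[(m:ℝ)] S := by
      rw [Bset_eq_init_image hS, ← muH_pi_eq_volume]
      have := lipschitz_init.hausdorffMeasure_image_le (d := (m:ℝ)) (by positivity) S
      simpa using this
    calc volume (coneSet S) ≤ 2 * volume (hconeSet S) := step1
      _ ≤ 2 * ((KG : ℝ≥0∞) ^ (((m+1:ℕ)):ℝ) * volume (Bset' S)) := mul_le_mul_right step2 _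
      _ = C2 * volume (Bset' S) := by rw [hC2]; ring
      _ ≤ C2 * volume (Bset S) := mul_le_mul_right step3 _
      _ ≤ C2 * μH[(m:ℝ)] S := mul_le_mul_right step4 _
      _ ≤ (C1 + C2 + 1) * μH[(m:ℝ)] S := by
          refine mul_le_mul_left ?_ _
          calc C2 ≤ C1 + C2 := le_add_self
            _ ≤ C1 + C2 + 1 := le_self_add
end Aux7
noncomputable section Aux8
open MeasureTheory NNReal

lemma muH_euclid_comparison (n : ℕ) (s : ℝ) (hs : 0 ≤ s) : ∃ D : ℝ≥0∞, 0 < D ∧ D < ⊤ ∧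
    ∀ S : Set (EuclideanSpace ℝ (Fin n)),
      μH[s] S ≤ D * μH[s] (⇑(WithLp.equiv 2 (Fin n → ℝ)) '' S) ∧
      μH[s] (⇑(WithLp.equiv 2 (Fin n → ℝ)) '' S) ≤ D * μH[s] S := by
  set e := WithLp.equiv 2 (Fin n → ℝ) with he
  set K : ℝ≥0 := (Fintype.card (Fin n) : ℝ≥0) ^ ((1 : ℝ≥0∞)/2).toReal with hK
  have hanti : AntilipschitzWith K ⇑e := PiLp.antilipschitzWith_ofLp 2 _
  have hsymm : LipschitzWith K ⇑e.symm := by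
    intro a b
    have h1 : edist (e.symm a) (e.symm b) ≤ K * edist (e (e.symm a)) (e (e.symm b)) :=
      hanti _ _
    simpa using h1
  have hlip : LipschitzWith 1 ⇑e := PiLp.lipschitzWith_ofLp 2 _
  refine ⟨(K : ℝ≥0∞) ^ s + 1, lt_of_lt_of_le zero_lt_one le_add_self, ?_, ?_⟩
  · refine ENNReal.add_lt_top.2 ⟨?_, by norm_num⟩
    exact ENNReal.rpow_lt_top_of_nonneg hs ENNReal.coe_ne_top
  · intro S
    constructor
    · have h1 : μH[s] S = μH[s] (⇑e.symm '' (⇑e '' S)) := by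
        rw [Equiv.symm_image_image]
      rw [h1]
      calc μH[s] (⇑e.symm '' (⇑e '' S)) ≤ (K : ℝ≥0∞) ^ s * μH[s] (⇑e '' S) :=
            hsymm.hausdorffMeasure_image_le hs _
        _ ≤ ((K : ℝ≥0∞) ^ s + 1) * μH[s] (⇑e '' S) := mul_le_mul_left le_self_add _
    · calc μH[s] (⇑e '' S) ≤ (1 : ℝ≥0∞) ^ s * μH[s] S :=
            hlip.hausdorffMeasure_image_le hs _
        _ = μH[s] S := by rw [ENNReal.one_rpow, one_mul]
        _ ≤ ((K : ℝ≥0∞) ^ s + 1) * μH[s] S := by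
            nth_rewrite 1 [← one_mul (μH[s] S)]
            exact mul_le_mul_left le_add_self _

end Aux8
noncomputable section Aux9
open MeasureTheory NNReal

def KDset (m : ℕ) (c : Fin (m+1) → ℝ) : Set (Fin (m+1) → ℝ) :=
  {w | (∀ i, 0 < w i) ∧ ∑ j, c j * w j ≤ 1}

def KAset (m : ℕ) (c : Fin (m+1) → ℝ) (ε N : ℝ) : Set (Fin (m+1) → ℝ) :=
  {w ∈ KDset m c | ε/N < max ((∑ i, w i)⁻¹ * w ⟨m-1, by omega⟩) ((∑ i, w i)⁻¹ * w ⟨m, by omega⟩)}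

set_option maxHeartbeats 1600000 in
lemma claimC (m : ℕ) (hm : 3 ≤ m) (c : Fin (m+1) → ℝ) (hc : ∀ i, 0 < c i)
    (ε N : ℝ) (hε0 : 0 < ε) (hε1 : ε < 1) (hN : 0 < N)
    (hdom : ∀ i j : Fin (m+1), (i:ℕ) < m - 1 → m - 1 ≤ (j:ℕ) → (N/ε^2) * c i < c j) :
    volume (KAset m c ε N) ≤ ENNReal.ofReal (2^(m+1) * ε^2) * volume (KDset m c) ∧
    0 < volume (KDset m c) ∧ volume (KDset m c) < ⊤ := by
  classical
  set P : Fin (m+1) → Prop := fun i => (i:ℕ) < m - 1 with hP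
  have hPdec : DecidablePred P := fun i => Nat.decLt _ _
  set pidx : Fin (m+1) := ⟨m-1, by omega⟩ with hpidx
  set qidx : Fin (m+1) := ⟨m, by omega⟩ with hqidx
  haveI hSmallNe : Nonempty {i : Fin (m+1) // P i} := ⟨⟨⟨0, by omega⟩, by
    show (0:ℕ) < m - 1; omega⟩⟩
  haveI hLargeNe : Nonempty {i : Fin (m+1) // ¬ P i} := ⟨⟨qidx, by
    show ¬ ((m:ℕ) < m - 1); omega⟩⟩
  -- cardinalities
  have eS : {i : Fin (m+1) // P i} ≃ Fin (m-1) :=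
    { toFun := fun i => ⟨i.1.1, i.2⟩
      invFun := fun j => ⟨⟨j.1, by omega⟩, j.2⟩
      left_inv := fun i => by ext; rfl
      right_inv := fun j => rfl }
  have eL : {i : Fin (m+1) // ¬ P i} ≃ Fin 2 :=
    { toFun := fun i => ⟨i.1.1 - (m-1), by
        have h1 := i.1.2
        have h2 : ¬ (i.1.1 < m - 1) := i.2
        omega⟩
      invFun := fun j => ⟨⟨m - 1 + j.1, by have := j.2; omega⟩, by
        show ¬ (m - 1 + j.1 < m - 1); omega⟩
      left_inv := fun i => by
        have h2 : ¬ (i.1.1 < m - 1) := i.2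
        apply Subtype.ext; apply Fin.ext; show m - 1 + (i.1.1 - (m-1)) = i.1.1; omega
      right_inv := fun j => by
        apply Fin.ext; show m - 1 + j.1 - (m-1) = j.1; omega }
  have cardSmall : Fintype.card {i : Fin (m+1) // P i} = m - 1 := by
    rw [Fintype.card_congr eS, Fintype.card_fin]
  have cardLarge : Fintype.card {i : Fin (m+1) // ¬ P i} = 2 := by
    rw [Fintype.card_congr eL, Fintype.card_fin]
  -- sum splitting
  have hsplit : ∀ f : Fin (m+1) → ℝ,
      ∑ i, f i = (∑ i : {i // P i}, f i.1) + ∑ i : {i // ¬ P i}, f i.1 := by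
    intro f
    rw [← Finset.sum_filter_add_sum_filter_not Finset.univ P f]
    congr 1
    · exact Finset.sum_subtype _ (by simp) f
    · exact Finset.sum_subtype _ (by simp) f
  have hne_pq : pidx ≠ qidx := by
    intro h
    have := congrArg Fin.val h
    simp only [hpidx, hqidx] at this
    omega
  have hfilter : Finset.univ.filter (fun i => ¬ P i) = ({pidx, qidx} : Finset (Fin (m+1))) := by
    ext i
    simp only [Finset.mem_filter, Finset.mem_univ, true_and, Finset.mem_insert,
      Finset.mem_singleton, hP]
    constructor
    · intro hi
      rcases Nat.lt_or_ge (i:ℕ) m with h | h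
      · left; apply Fin.ext; show (i:ℕ) = m - 1; omega
      · right; apply Fin.ext
        have := i.2
        show (i:ℕ) = m; omega
    · rintro (rfl | rfl)
      · show ¬ (m - 1 < m - 1); omega
      · show ¬ (m < m - 1); omega
  have hlarge_sum : ∀ f : Fin (m+1) → ℝ,
      (∑ i : {i // ¬ P i}, f i.1) = f pidx + f qidx := by
    intro f
    rw [← Finset.sum_subtype (Finset.univ.filter (fun i => ¬ P i)) (by simp) f]
    rw [hfilter, Finset.sum_pair hne_pq]
  -- corner sets
  set cS : {i : Fin (m+1) // P i} → ℝ := fun i => c i.1 with hcS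
  set cL : {i : Fin (m+1) // ¬ P i} → ℝ := fun i => c i.1 with hcL
  have hcSpos : ∀ i, 0 < cS i := fun i => hc i.1
  have hcLpos : ∀ i, 0 < cL i := fun i => hc i.1
  set esub := MeasurableEquiv.piEquivPiSubtypeProd (fun _ : Fin (m+1) => ℝ) P with hesub
  have hvol_pre : ∀ (X : Set ({i // P i} → ℝ)) (Y : Set ({i // ¬ P i} → ℝ)),
      volume (esub ⁻¹' (X ×ˢ Y)) = volume X * volume Y := by
    intro X Y
    rw [← MeasurableEquiv.map_apply esub,
      (volume_preserving_piEquivPiSubtypeProd (fun _ : Fin (m+1) => ℝ) P).map_eq,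
      Measure.volume_eq_prod, Measure.prod_prod]
  have hesub_apply : ∀ (w : Fin (m+1) → ℝ),
      esub w = (fun i : {i // P i} => w i.1, fun i : {i // ¬ P i} => w i.1) := fun w => rfl
  -- upper inclusion
  have hKA_sub : KAset m c ε N ⊆ esub ⁻¹' (cornerSet cS ε ×ˢ cornerSet cL 1) := by
    rintro w ⟨⟨hwpos, hwsum⟩, hwmax⟩
    have hspos : 0 < ∑ i, w i :=
      Finset.sum_pos (fun i _ => hwpos i) Finset.univ_nonempty
    have hγpos : 0 < ∑ i : {i // P i}, cS i * w i.1 :=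
      Finset.sum_pos (fun i _ => mul_pos (hcSpos i) (hwpos i.1)) Finset.univ_nonempty
    have hterms_nonneg : ∀ j : Fin (m+1), 0 ≤ c j * w j :=
      fun j => (mul_pos (hc j) (hwpos j)).le
    have key : ∀ j : Fin (m+1), ¬ P j → ε/N < (∑ i, w i)⁻¹ * w j →
        ∑ i : {i // P i}, cS i * w i.1 < ε := by
      intro j hj hlt
      have hwj : ε/N * (∑ i, w i) < w j := by
        rw [inv_mul_eq_div, lt_div_iff₀ hspos] at hlt
        calc ε/N * (∑ i, w i) = ε/N * (∑ i, w i) := rfl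
          _ < w j := by nlinarith
      have ht2 : (∑ i : {i // P i}, w i.1) ≤ ∑ i, w i := by
        rw [hsplit w]
        have : 0 ≤ ∑ i : {i // ¬ P i}, w i.1 :=
          Finset.sum_nonneg fun i _ => (hwpos i.1).le
        linarith
      have ht3 : (N/ε^2) * (∑ i : {i // P i}, cS i * w i.1) ≤
          c j * (∑ i : {i // P i}, w i.1) := by
        rw [Finset.mul_sum, Finset.mul_sum]
        refine Finset.sum_le_sum fun i _ => ?_
        have h := hdom i.1 j i.2 (by omega)
        have hwi := (hwpos i.1).le
        calc N/ε^2 * (cS i * w i.1) = (N/ε^2 * cS i) * w i.1 := by ring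
          _ ≤ c j * w i.1 := mul_le_mul_of_nonneg_right h.le hwi
      have ht4 : c j * w j ≤ 1 := by
        calc c j * w j ≤ ∑ i, c i * w i :=
              Finset.single_le_sum (fun i _ => hterms_nonneg i) (Finset.mem_univ j)
          _ ≤ 1 := hwsum
      have ht5 : (1/ε) * (∑ i : {i // P i}, cS i * w i.1) < c j * w j := by
        have h1 : c j * (ε/N * (∑ i, w i)) < c j * w j :=
          mul_lt_mul_of_pos_left hwj (hc j)
        have h2 : c j * (∑ i : {i // P i}, w i.1) ≤ c j * (∑ i, w i) :=
          mul_le_mul_of_nonneg_left ht2 (hc j).le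
        have h3 : (1/ε) * (∑ i : {i // P i}, cS i * w i.1) =
            (ε/N) * ((N/ε^2) * (∑ i : {i // P i}, cS i * w i.1)) := by
          field_simp
        rw [h3]
        have h4 : (ε/N) * ((N/ε^2) * (∑ i : {i // P i}, cS i * w i.1)) ≤
            (ε/N) * (c j * (∑ i : {i // P i}, w i.1)) :=
          mul_le_mul_of_nonneg_left ht3 (by positivity)
        have h5 : (ε/N) * (c j * (∑ i : {i // P i}, w i.1)) ≤
            (ε/N) * (c j * (∑ i, w i)) :=
          mul_le_mul_of_nonneg_left h2 (by positivity)
        have h6 : (ε/N) * (c j * (∑ i, w i)) = c j * (ε/N * (∑ i, w i)) := by ring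
        linarith
      have : (1/ε) * (∑ i : {i // P i}, cS i * w i.1) < 1 := lt_of_lt_of_le ht5 ht4
      rw [div_mul_eq_mul_div, one_mul, div_lt_one hε0] at this
      exact this
    have hsmall : ∑ i : {i // P i}, cS i * w i.1 < ε := by
      rcases lt_max_iff.1 hwmax with hcase | hcase
      · exact key pidx (by show ¬ ((m-1:ℕ) < m - 1); omega) hcase
      · exact key qidx (by show ¬ ((m:ℕ) < m - 1); omega) hcase
    rw [Set.mem_preimage, hesub_apply, Set.mem_prod]
    refine ⟨⟨fun i => hwpos i.1, hsmall⟩, fun i => hwpos i.1, ?_⟩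
    have hLsum : (∑ i : {i // ¬ P i}, cL i * w i.1) = c pidx * w pidx + c qidx * w qidx :=
      hlarge_sum (fun j => c j * w j)
    have htotal : (∑ i : {i // P i}, cS i * w i.1) + (∑ i : {i // ¬ P i}, cL i * w i.1)
        = ∑ i, c i * w i := (hsplit (fun j => c j * w j)).symm
    have : (∑ i : {i // ¬ P i}, cL i * w i.1) ≤ 1 - (∑ i : {i // P i}, cS i * w i.1) := by
      linarith [hwsum, htotal.symm.le]
    linarith
  -- lower inclusion
  have hKD_sup : esub ⁻¹' (cornerSet cS (1/2) ×ˢ cornerSet cL (1/2)) ⊆ KDset m c := by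
    intro w hw
    rw [Set.mem_preimage, hesub_apply, Set.mem_prod] at hw
    obtain ⟨⟨hS1, hS2⟩, hL1, hL2⟩ := hw
    constructor
    · intro i
      by_cases hi : P i
      · exact hS1 ⟨i, hi⟩
      · exact hL1 ⟨i, hi⟩
    · rw [hsplit (fun j => c j * w j)]
      have h1 : (∑ i : {i // P i}, c i.1 * w i.1) < 1/2 := hS2
      have h2 : (∑ i : {i // ¬ P i}, c i.1 * w i.1) < 1/2 := hL2
      linarith
  -- volumes
  set VS := volume (cornerSet cS 1) with hVS
  set VL := volume (cornerSet cL 1) with hVL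
  have hVSpos : 0 < VS := cornerSet_volume_pos cS hcSpos one_pos
  have hVLpos : 0 < VL := cornerSet_volume_pos cL hcLpos one_pos
  have hVStop : VS < ⊤ := cornerSet_volume_lt_top cS hcSpos one_pos
  have hVLtop : VL < ⊤ := cornerSet_volume_lt_top cL hcLpos one_pos
  have hvolKA : volume (KAset m c ε N) ≤ ENNReal.ofReal (ε ^ (m-1)) * VS * VL := by
    calc volume (KAset m c ε N)
        ≤ volume (esub ⁻¹' (cornerSet cS ε ×ˢ cornerSet cL 1)) := measure_mono hKA_sub
      _ = volume (cornerSet cS ε) * volume (cornerSet cL 1) := hvol_pre _ _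
      _ = (ENNReal.ofReal (ε ^ (m-1)) * VS) * VL := by
          rw [cornerSet_volume cS hcSpos hε0, cardSmall]
      _ = ENNReal.ofReal (ε ^ (m-1)) * VS * VL := rfl
  have hvolKD : ENNReal.ofReal ((1/2:ℝ) ^ (m-1)) * VS *
      (ENNReal.ofReal ((1/2:ℝ) ^ 2) * VL) ≤ volume (KDset m c) := by
    calc ENNReal.ofReal ((1/2:ℝ) ^ (m-1)) * VS * (ENNReal.ofReal ((1/2:ℝ) ^ 2) * VL)
        = volume (cornerSet cS (1/2)) * volume (cornerSet cL (1/2)) := by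
          rw [cornerSet_volume cS hcSpos (by norm_num), cardSmall,
            cornerSet_volume cL hcLpos (by norm_num), cardLarge]
      _ = volume (esub ⁻¹' (cornerSet cS (1/2) ×ˢ cornerSet cL (1/2))) := (hvol_pre _ _).symm
      _ ≤ volume (KDset m c) := measure_mono hKD_sup
  have hKDpos : 0 < volume (KDset m c) := by
    refine lt_of_lt_of_le ?_ hvolKD
    have h1 : 0 < ENNReal.ofReal ((1/2:ℝ) ^ (m-1)) := by
      rw [ENNReal.ofReal_pos]; positivity
    have h2 : 0 < ENNReal.ofReal ((1/2:ℝ) ^ 2) := by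
      rw [ENNReal.ofReal_pos]; positivity
    exact ENNReal.mul_pos (ENNReal.mul_pos h1.ne' hVSpos.ne').ne'
      (ENNReal.mul_pos h2.ne' hVLpos.ne').ne'
  have hKDtop : volume (KDset m c) < ⊤ := by
    have hsub : KDset m c ⊆ cornerSet c 2 := by
      rintro w ⟨hwpos, hwsum⟩
      exact ⟨hwpos, by linarith⟩
    exact lt_of_le_of_lt (measure_mono hsub) (cornerSet_volume_lt_top c hc two_pos)
  refine ⟨?_, hKDpos, hKDtop⟩
  -- final combination
  have hεpow : ENNReal.ofReal (ε ^ (m-1)) ≤ ENNReal.ofReal (ε ^ 2) := by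
    refine ENNReal.ofReal_le_ofReal ?_
    exact pow_le_pow_of_le_one hε0.le hε1.le (by omega)
  have hmain : volume (KAset m c ε N) ≤ ENNReal.ofReal (ε ^ 2) * (VS * VL) := by
    refine le_trans hvolKA ?_
    rw [mul_assoc]
    exact mul_le_mul_left hεpow _
  have hVSVL : VS * VL ≤ ENNReal.ofReal (2 ^ (m+1)) * volume (KDset m c) := by
    have hhalf : ENNReal.ofReal ((2:ℝ) ^ (m+1)) *
        (ENNReal.ofReal ((1/2:ℝ) ^ (m-1)) * (ENNReal.ofReal ((1/2:ℝ) ^ 2))) = 1 := by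
      rw [← ENNReal.ofReal_mul (by positivity), ← ENNReal.ofReal_mul (by positivity)]
      rw [show ((2:ℝ) ^ (m+1) * ((1/2:ℝ) ^ (m-1) * (1/2:ℝ) ^ 2)) = 1 from by
        have hexp : (2:ℝ)^(m+1) = 2^(m-1) * 2^2 := by
          rw [← pow_add]; congr 1; omega
        have e1 : ((1:ℝ)/2) ^ (m-1) = ((2:ℝ)^(m-1))⁻¹ := by
          rw [div_pow, one_pow, one_div]
        have e2 : ((1:ℝ)/2) ^ 2 = ((2:ℝ)^2)⁻¹ := by norm_num
        rw [e1, e2, hexp]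
        have h1 : ((2:ℝ)^(m-1)) ≠ 0 := by positivity
        have h2 : ((2:ℝ)^2) ≠ 0 := by positivity
        field_simp]
      exact ENNReal.ofReal_one
    calc VS * VL = 1 * (VS * VL) := (one_mul _).symm
      _ = ENNReal.ofReal ((2:ℝ) ^ (m+1)) *
          (ENNReal.ofReal ((1/2:ℝ) ^ (m-1)) * (ENNReal.ofReal ((1/2:ℝ) ^ 2))) * (VS * VL) := by
          rw [hhalf]
      _ = ENNReal.ofReal ((2:ℝ) ^ (m+1)) *
          (ENNReal.ofReal ((1/2:ℝ) ^ (m-1)) * VS * (ENNReal.ofReal ((1/2:ℝ) ^ 2) * VL)) := by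
          ring
      _ ≤ ENNReal.ofReal ((2:ℝ) ^ (m+1)) * volume (KDset m c) :=
          mul_le_mul_right hvolKD _
  calc volume (KAset m c ε N) ≤ ENNReal.ofReal (ε ^ 2) * (VS * VL) := hmain
    _ ≤ ENNReal.ofReal (ε ^ 2) * (ENNReal.ofReal (2 ^ (m+1)) * volume (KDset m c)) :=
        mul_le_mul_right hVSVL _
    _ = ENNReal.ofReal (2 ^ (m+1) * ε ^ 2) * volume (KDset m c) := by
        rw [← mul_assoc, ← ENNReal.ofReal_mul (by positivity), mul_comm (ε^2)]

end Aux9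
set_option maxHeartbeats 2000000 in
/-- **Points with large last two coordinates after `R^n` are rare.** For `d ≥ 4` and `ζ > 1`
there is `C'` such that for all `0 < ε < 1`, `N > 0` and any matrix `M = M(x,n)` of Rauzy
induction reaching `π_L`, satisfying the column-domination condition (2) and the balance
condition (3), the set of `y ∈ MΔ` with `max((R^n y)_{d-1}, (R^n y)_d) > ε/N` has
`λ_{d-1}`-measure less than `C' ε λ_{d-1}(MΔ)`. -/
theorem stmt11 (d : ℕ) (hd : 4 ≤ d) (ζ : ℝ) (hζ : 1 < ζ) :
    ∃ C' : ℝ, 0 < C' ∧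
    ∀ ε N : ℝ, 0 < ε → ε < 1 → 0 < N →
    ∀ π : PermDatum d, π.Irreducible →
    ∀ x : EuclideanSpace ℝ (Fin d), x ∈ openSimplex d →
    ∀ (n : ℕ) (M : Matrix (Fin d) (Fin d) ℝ) (p : (Fin d → ℝ) × PermDatum d),
      rauzyMat x π n = some M → rauzyIter x π n = some p → p.2 = piL d →
      (∀ i j : Fin d, (i : ℕ) < d - 2 → d - 2 ≤ (j : ℕ) →
        (N / ε ^ 2) * colSum M i < colSum M j) →
      (∀ j j' : Fin d, d - 2 ≤ (j : ℕ) → d - 2 ≤ (j' : ℕ) →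
        colSum M j < ζ * colSum M j') →
      (∀ i i' : Fin d, (i : ℕ) < d - 2 → (i' : ℕ) < d - 2 →
        colSum M i < ζ * colSum M i') →
      μH[(d : ℝ) - 1] {y ∈ mapSimplex M |
          ε / N < max (Rback M y ⟨d - 2, by omega⟩) (Rback M y ⟨d - 1, by omega⟩)} <
        ENNReal.ofReal (C' * ε) * μH[(d : ℝ) - 1] (mapSimplex M) := by
  obtain ⟨m, rfl⟩ : ∃ m, d = m + 1 := ⟨d - 1, by omega⟩
  have hm : 3 ≤ m := by omega
  obtain ⟨CC, hCC0, hCCtop, hup, hlo⟩ := cone_muH_comparison m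
  obtain ⟨DD, hDD0, hDDtop, hDe⟩ := muH_euclid_comparison (m+1) (m:ℝ) (by positivity)
  set AA : ℝ≥0∞ := CC * CC * DD * DD with hAA
  have hAAtop : AA ≠ ⊤ :=
    (ENNReal.mul_lt_top (ENNReal.mul_lt_top (ENNReal.mul_lt_top hCCtop hCCtop) hDDtop)
      hDDtop).ne
  refine ⟨AA.toReal * 2^(m+1) + 1, by positivity, ?_⟩
  intro ε N hε0 hε1 hN π hπ x hx n M p hM hp hpL h2 h3 h4
  set C' : ℝ := AA.toReal * 2^(m+1) + 1 with hC'
  obtain ⟨hMnn, hMdet⟩ := rauzyMat_props n M hM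
  have hc : ∀ j, 0 < colSum M j := colSum_pos hMnn hMdet
  have hd0 : 0 < m + 1 := by omega
  have hexp : ((m+1:ℕ):ℝ) - 1 = (m:ℝ) := by push_cast; ring
  rw [hexp]
  -- pi-world sets
  set SΔp : Set (Fin (m+1) → ℝ) :=
    {z | (∑ i, z i = 1) ∧ ∀ i, 0 < M⁻¹.mulVec z i} with hSΔp
  set SAp : Set (Fin (m+1) → ℝ) :=
    {z ∈ SΔp | ε/N < max ((∑ j, M⁻¹.mulVec z j)⁻¹ * M⁻¹.mulVec z ⟨m-1, by omega⟩)
      ((∑ j, M⁻¹.mulVec z j)⁻¹ * M⁻¹.mulVec z ⟨m, by omega⟩)} with hSAp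
  set e := WithLp.equiv 2 (Fin (m+1) → ℝ) with he
  set SAg : Set (EuclideanSpace ℝ (Fin (m+1))) :=
    {y ∈ mapSimplex M | ε / N < max (Rback M y ⟨m-1, by omega⟩) (Rback M y ⟨m, by omega⟩)}
    with hSAg
  show μH[(m:ℝ)] SAg < ENNReal.ofReal (C' * ε) * μH[(m:ℝ)] (mapSimplex M)
  -- image identifications
  have himg_SΔ : ⇑e '' mapSimplex M = SΔp := by
    ext z
    constructor
    · rintro ⟨y, hy, rfl⟩
      exact (mem_mapSimplex_iff hd0 hMnn hMdet y).1 hy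
    · intro hz
      exact ⟨e.symm z, (mem_mapSimplex_iff hd0 hMnn hMdet (e.symm z)).2 hz,
        e.apply_symm_apply z⟩
  have himg_SA : ⇑e '' SAg = SAp := by
    ext z
    constructor
    · rintro ⟨y, ⟨hy1, hy2⟩, rfl⟩
      exact ⟨(mem_mapSimplex_iff hd0 hMnn hMdet y).1 hy1, hy2⟩
    · rintro ⟨hz1, hz2⟩
      exact ⟨e.symm z, ⟨(mem_mapSimplex_iff hd0 hMnn hMdet (e.symm z)).2 hz1, hz2⟩,
        e.apply_symm_apply z⟩
  -- subset of Hpos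
  have hSub_Δ : SΔp ⊆ Hpos m := by
    rintro z ⟨hz1, hz2⟩
    refine ⟨fun i => ?_, hz1⟩
    have hz : z = M.mulVec (M⁻¹.mulVec z) := (mulVec_inv_mulVec hMdet z).symm
    rw [hz]
    show 0 ≤ ∑ j, M i j * (M⁻¹.mulVec z) j
    exact Finset.sum_nonneg fun j _ => mul_nonneg (hMnn i j) (hz2 j).le
  have hSub_A : SAp ⊆ Hpos m := fun z hz => hSub_Δ hz.1
  -- cone identifications
  have hsum_mv : ∀ w : Fin (m+1) → ℝ, ∑ i, M.mulVec w i = ∑ j, colSum M j * w j :=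
    sum_mulVec M
  have hratio : ∀ (v : Fin (m+1) → ℝ) (t : ℝ), t ≠ 0 →
      ∀ i, (∑ j, (t • v) j)⁻¹ * (t • v) i = (∑ j, v j)⁻¹ * v i := by
    intro v t ht i
    simp only [Pi.smul_apply, smul_eq_mul, ← Finset.mul_sum]
    rw [mul_inv]
    rw [show t⁻¹ * (∑ j, v j)⁻¹ * (t * v i) = (t⁻¹ * t) * ((∑ j, v j)⁻¹ * v i) from by ring,
      inv_mul_cancel₀ ht, one_mul]
  have hconeΔ : coneSet SΔp = ⇑(Matrix.toLin' M) '' KDset m (colSum M) := by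
    ext z
    constructor
    · rintro ⟨t, ⟨ht0, ht1⟩, y, ⟨hy1, hy2⟩, rfl⟩
      refine ⟨M⁻¹.mulVec (t • y), ⟨?_, ?_⟩, ?_⟩
      · intro i
        rw [Matrix.mulVec_smul]
        exact smul_pos ht0 (hy2 i)
      · rw [← hsum_mv, mulVec_inv_mulVec hMdet]
        simp only [Pi.smul_apply, smul_eq_mul, ← Finset.mul_sum, hy1, mul_one]
        exact ht1
      · rw [Matrix.toLin'_apply, mulVec_inv_mulVec hMdet]
    · rintro ⟨w, ⟨hw1, hw2⟩, rfl⟩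
      have ht0 : 0 < ∑ j, colSum M j * w j :=
        Finset.sum_pos (fun j _ => mul_pos (hc j) (hw1 j)) Finset.univ_nonempty
      refine ⟨∑ j, colSum M j * w j, ⟨ht0, hw2⟩,
        (∑ j, colSum M j * w j)⁻¹ • (M.mulVec w), ⟨?_, ?_⟩, ?_⟩
      · simp only [Pi.smul_apply, smul_eq_mul, ← Finset.mul_sum]
        rw [hsum_mv, inv_mul_cancel₀ ht0.ne']
      · intro i
        rw [Matrix.mulVec_smul, inv_mulVec_mulVec hMdet]
        exact smul_pos (inv_pos.2 ht0) (hw1 i)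
      · rw [Matrix.toLin'_apply, smul_smul, mul_inv_cancel₀ ht0.ne', one_smul]
  have hconeA : coneSet SAp = ⇑(Matrix.toLin' M) '' KAset m (colSum M) ε N := by
    ext z
    constructor
    · rintro ⟨t, ⟨ht0, ht1⟩, y, ⟨⟨hy1, hy2⟩, hy3⟩, rfl⟩
      refine ⟨M⁻¹.mulVec (t • y), ⟨⟨?_, ?_⟩, ?_⟩, ?_⟩
      · intro i
        rw [Matrix.mulVec_smul]
        exact smul_pos ht0 (hy2 i)
      · rw [← hsum_mv, mulVec_inv_mulVec hMdet]
        simp only [Pi.smul_apply, smul_eq_mul, ← Finset.mul_sum, hy1, mul_one]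
        exact ht1
      · rw [Matrix.mulVec_smul]
        rw [hratio (M⁻¹.mulVec y) t ht0.ne' ⟨m-1, by omega⟩,
          hratio (M⁻¹.mulVec y) t ht0.ne' ⟨m, by omega⟩]
        exact hy3
      · rw [Matrix.toLin'_apply, mulVec_inv_mulVec hMdet]
    · rintro ⟨w, ⟨⟨hw1, hw2⟩, hw3⟩, rfl⟩
      have ht0 : 0 < ∑ j, colSum M j * w j :=
        Finset.sum_pos (fun j _ => mul_pos (hc j) (hw1 j)) Finset.univ_nonempty
      refine ⟨∑ j, colSum M j * w j, ⟨ht0, hw2⟩,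
        (∑ j, colSum M j * w j)⁻¹ • (M.mulVec w), ⟨⟨?_, ?_⟩, ?_⟩, ?_⟩
      · simp only [Pi.smul_apply, smul_eq_mul, ← Finset.mul_sum]
        rw [hsum_mv, inv_mul_cancel₀ ht0.ne']
      · intro i
        rw [Matrix.mulVec_smul, inv_mulVec_mulVec hMdet]
        exact smul_pos (inv_pos.2 ht0) (hw1 i)
      · rw [Matrix.mulVec_smul, inv_mulVec_mulVec hMdet]
        rw [hratio w (∑ j, colSum M j * w j)⁻¹ (inv_ne_zero ht0.ne') ⟨m-1, by omega⟩,
          hratio w (∑ j, colSum M j * w j)⁻¹ (inv_ne_zero ht0.ne') ⟨m, by omega⟩]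
        exact hw3
      · rw [Matrix.toLin'_apply, smul_smul, mul_inv_cancel₀ ht0.ne', one_smul]
  -- volume invariance under M
  have hvol_img : ∀ K : Set (Fin (m+1) → ℝ), volume (⇑(Matrix.toLin' M) '' K) = volume K := by
    intro K
    rw [Measure.addHaar_image_linearMap, LinearMap.det_toLin', hMdet]
    norm_num
  -- claim C
  obtain ⟨hCest, hKDpos, hKDtop⟩ := claimC m hm (colSum M) hc ε N hε0 hε1 hN
    (fun i j hi hj => h2 i j (by omega) (by omega))
  -- chains
  have hL1 : μH[(m:ℝ)] SAg ≤
      DD * CC * (ENNReal.ofReal (2^(m+1) * ε^2) * volume (KDset m (colSum M))) := by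
    calc μH[(m:ℝ)] SAg ≤ DD * μH[(m:ℝ)] (⇑e '' SAg) := (hDe SAg).1
      _ = DD * μH[(m:ℝ)] SAp := by rw [himg_SA]
      _ ≤ DD * (CC * volume (coneSet SAp)) := mul_le_mul_right (hup SAp hSub_A) _
      _ = DD * CC * volume (KAset m (colSum M) ε N) := by
          rw [hconeA, hvol_img, mul_assoc]
      _ ≤ DD * CC * (ENNReal.ofReal (2^(m+1) * ε^2) * volume (KDset m (colSum M))) :=
          mul_le_mul_right hCest _
  have hL2 : volume (KDset m (colSum M)) ≤ CC * (DD * μH[(m:ℝ)] (mapSimplex M)) := by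
    calc volume (KDset m (colSum M)) = volume (coneSet SΔp) := by rw [hconeΔ, hvol_img]
      _ ≤ CC * μH[(m:ℝ)] SΔp := hlo SΔp hSub_Δ
      _ = CC * μH[(m:ℝ)] (⇑e '' mapSimplex M) := by rw [himg_SΔ]
      _ ≤ CC * (DD * μH[(m:ℝ)] (mapSimplex M)) :=
          mul_le_mul_right (hDe (mapSimplex M)).2 _
  -- conclude
  by_cases hXtop : μH[(m:ℝ)] (mapSimplex M : Set (EuclideanSpace ℝ (Fin (m+1)))) = ⊤
  · rw [hXtop, ENNReal.mul_top (by
      rw [Ne, ENNReal.ofReal_eq_zero]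
      push_neg
      rw [hC']
      have ha : (0:ℝ) ≤ AA.toReal := ENNReal.toReal_nonneg
      positivity)]
    refine lt_of_le_of_lt hL1 ?_
    exact ENNReal.mul_lt_top (ENNReal.mul_lt_top hDDtop hCCtop)
      (ENNReal.mul_lt_top ENNReal.ofReal_lt_top hKDtop)
  · have hX0 : μH[(m:ℝ)] (mapSimplex M : Set (EuclideanSpace ℝ (Fin (m+1)))) ≠ 0 := by
      intro h0
      rw [h0, mul_zero, mul_zero] at hL2
      exact absurd (le_antisymm hL2 zero_le) hKDpos.ne'
    have hstep : μH[(m:ℝ)] SAg ≤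
        (AA * ENNReal.ofReal (2^(m+1) * ε^2)) * μH[(m:ℝ)] (mapSimplex M) := by
      refine hL1.trans ?_
      calc DD * CC * (ENNReal.ofReal (2^(m+1) * ε^2) * volume (KDset m (colSum M)))
          ≤ DD * CC * (ENNReal.ofReal (2^(m+1) * ε^2) *
            (CC * (DD * μH[(m:ℝ)] (mapSimplex M)))) :=
            mul_le_mul_right (mul_le_mul_right hL2 _) _
        _ = (AA * ENNReal.ofReal (2^(m+1) * ε^2)) * μH[(m:ℝ)] (mapSimplex M) := by
            rw [hAA]; ring
    refine lt_of_le_of_lt hstep ?_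
    rw [ENNReal.mul_lt_mul_iff_left hX0 hXtop]
    have hAAeq : AA = ENNReal.ofReal AA.toReal := (ENNReal.ofReal_toReal hAAtop).symm
    rw [hAAeq, ← ENNReal.ofReal_mul ENNReal.toReal_nonneg]
    rw [ENNReal.ofReal_lt_ofReal_iff (by positivity)]
    have ha : (0:ℝ) ≤ AA.toReal := ENNReal.toReal_nonneg
    have hpow : (0:ℝ) < 2^(m+1) := by positivity
    rw [hC']
    nlinarith [mul_nonneg (mul_nonneg ha hpow.le) (mul_nonneg hε0.le (sub_nonneg.2 hε1.le))]
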